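/- Let S : ℂ → Matrix (Fin N) (Fin N) ℂ be twice continuously real-differentiable with S(z) invertible for every z. Define A_{z̄} := −i·S⁻¹·∂_{z̄}S, A_z := (A_{z̄})ᴴ = i·∂_z(Sᴴ)·(Sᴴ)⁻¹, the real gauge-field components A₁ := A_z + A_{z̄} and A₂ := i·(A_z − A_{z̄}), the field strength F₁₂ := ∂₁A₂ − ∂₂A₁ + i·[A₁, A₂] (where ∂₁, ∂₂ are the real partial derivatives in the directions 1 and i of ℂ ≅ ℝ²), and the gauge-invariant Ω := S·Sᴴ. Then pointwise F₁₂ = −2·S⁻¹·∂_{z̄}((∂_zΩ)·Ω⁻¹)·S. -/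

import Mathlib

open Matrix Complex

attribute [local instance] Matrix.frobeniusNormedAddCommGroup Matrix.frobeniusNormedSpace
attribute [local instance] Matrix.frobeniusNormedRing Matrix.frobeniusNormedAlgebra

/-- The real partial derivative in the direction `1` of `ℂ ≅ ℝ²`. -/
noncomputable def d1 {E : Type*} [NormedAddCommGroup E] [NormedSpace ℂ E]
    (f : ℂ → E) (w : ℂ) : E := fderiv ℝ f w 1

/-- The real partial derivative in the direction `i` of `ℂ ≅ ℝ²`. -/
noncomputable def d2 {E : Type*} [NormedAddCommGroup E] [NormedSpace ℂ E]
    (f : ℂ → E) (w : ℂ) : E := fderiv ℝ f w Complex.I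

/-- The Wirtinger derivative `∂_z f (w) = (1/2)(Df(w)[1] − i·Df(w)[i])`. -/
noncomputable def dz {E : Type*} [NormedAddCommGroup E] [NormedSpace ℂ E]
    (f : ℂ → E) (w : ℂ) : E :=
  (2 : ℂ)⁻¹ • (d1 f w - Complex.I • d2 f w)

/-- The Wirtinger derivative `∂_{z̄} f (w) = (1/2)(Df(w)[1] + i·Df(w)[i])`. -/
noncomputable def dzbar {E : Type*} [NormedAddCommGroup E] [NormedSpace ℂ E]
    (f : ℂ → E) (w : ℂ) : E :=
  (2 : ℂ)⁻¹ • (d1 f w + Complex.I • d2 f w)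


namespace VortexAux

variable {N : ℕ}
local notation "M" => Matrix (Fin N) (Fin N) ℂ

/-- `conjTranspose` as a continuous `ℝ`-linear map on square complex matrices. -/
noncomputable def starCLM : M →L[ℝ] M :=
  LinearMap.toContinuousLinearMap
    { toFun := fun A => Aᴴ
      map_add' := fun A B => conjTranspose_add A B
      map_smul' := fun r A => by
        simp [conjTranspose_smul (α := ℂ) (R := ℝ) r A] }

@[simp] lemma starCLM_apply (A : M) : starCLM A = Aᴴ := rfl

lemma diff_star {f : ℂ → M} (hf : Differentiable ℝ f) :
    Differentiable ℝ (fun w => (f w)ᴴ) :=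
  starCLM.differentiable.comp hf

lemma contDiff_star_matrix {f : ℂ → M} {n : ℕ∞} (hf : ContDiff ℝ n f) :
    ContDiff ℝ n (fun w => (f w)ᴴ) :=
  starCLM.contDiff.comp hf

lemma fderiv_star_apply {f : ℂ → M} {z : ℂ} (hf : DifferentiableAt ℝ f z) (v : ℂ) :
    fderiv ℝ (fun w => (f w)ᴴ) z v = (fderiv ℝ f z v)ᴴ := by
  have h := (starCLM.hasFDerivAt (x := f z)).comp z hf.hasFDerivAt
  have := h.fderiv
  rw [show (fun w => (f w)ᴴ) = ⇑starCLM ∘ f from rfl]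
  exact DFunLike.congr_fun this v

lemma isUnit_conjT {A : M} (h : IsUnit A) : IsUnit (Aᴴ) := by
  rw [Matrix.isUnit_iff_isUnit_det] at h ⊢
  rw [Matrix.det_conjTranspose]
  exact h.star

lemma diff_matrix_inv {f : ℂ → M} (hf : Differentiable ℝ f)
    (hu : ∀ w, IsUnit (f w)) : Differentiable ℝ (fun w => (f w)⁻¹) := by
  have : (fun w => (f w)⁻¹) = fun w => Ring.inverse (f w) :=
    funext fun w => (Matrix.nonsing_inv_eq_ringInverse _)
  rw [this]
  exact hf.inverse hu

lemma fderiv_matrix_inv_apply {f : ℂ → M} {z : ℂ} (hf : DifferentiableAt ℝ f z)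
    (hu : IsUnit (f z)) (v : ℂ) :
    fderiv ℝ (fun w => (f w)⁻¹) z v = -((f z)⁻¹ * fderiv ℝ f z v * (f z)⁻¹) := by
  have h1 : (fun w => (f w)⁻¹) = fun w => Ring.inverse (f w) :=
    funext fun w => (Matrix.nonsing_inv_eq_ringInverse _)
  have h2 : HasFDerivAt Ring.inverse
      (-ContinuousLinearMap.mulLeftRight ℝ M ↑hu.unit⁻¹ ↑hu.unit⁻¹) (f z) := by
    simpa [hu.unit_spec] using hasFDerivAt_ringInverse (𝕜 := ℝ) hu.unit
  have h3 := (h2.comp z hf.hasFDerivAt).fderiv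
  rw [h1, show (fun w => Ring.inverse (f w)) = Ring.inverse ∘ f from rfl]
  erw [h3]
  simp [Matrix.coe_units_inv, hu.unit_spec, mul_assoc]
  rw [← mul_assoc]; rfl

/-- Differentiability of a directional derivative of a `C²` function. -/
lemma diff_fderiv_apply {f : ℂ → M} (hf : ContDiff ℝ 2 f) (u : ℂ) :
    Differentiable ℝ (fun w => fderiv ℝ f w u) := by
  have h1 : Differentiable ℝ (fderiv ℝ f) :=
    (hf.fderiv_right (m := 1) (by norm_num)).differentiable (by norm_num)
  exact (ContinuousLinearMap.apply ℝ M u).differentiable.comp h1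

lemma fderiv_fderiv_apply {f : ℂ → M} (hf : ContDiff ℝ 2 f) (z v u : ℂ) :
    fderiv ℝ (fun w => fderiv ℝ f w u) z v = fderiv ℝ (fderiv ℝ f) z v u := by
  have h1 : DifferentiableAt ℝ (fderiv ℝ f) z :=
    ((hf.fderiv_right (m := 1) (by norm_num)).differentiable (by norm_num)) z
  have h2 : (fun w => fderiv ℝ f w u)
      = ⇑(ContinuousLinearMap.apply ℝ M u) ∘ fderiv ℝ f := rfl
  rw [h2]
  have h3 := ((ContinuousLinearMap.apply ℝ M u).hasFDerivAt.comp z h1.hasFDerivAt).fderiv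
  erw [h3]; rfl

lemma fderiv_fderiv_symm {f : ℂ → M} (hf : ContDiff ℝ 2 f) (z v u : ℂ) :
    fderiv ℝ (fderiv ℝ f) z v u = fderiv ℝ (fderiv ℝ f) z u v :=
  (hf.contDiffAt.isSymmSndFDerivAt (by norm_num)).eq v u


lemma fderiv_const_smul_apply' {f : ℂ → M} {z : ℂ} (hf : DifferentiableAt ℝ f z)
    (c : ℂ) (v : ℂ) :
    fderiv ℝ (fun w => c • f w) z v = c • fderiv ℝ f z v := by
  erw [fderiv_fun_const_smul hf c]; rfl

lemma fderiv_add_apply' {f g : ℂ → M} {z : ℂ} (hf : DifferentiableAt ℝ f z)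
    (hg : DifferentiableAt ℝ g z) (v : ℂ) :
    fderiv ℝ (fun w => f w + g w) z v = fderiv ℝ f z v + fderiv ℝ g z v := by
  erw [fderiv_fun_add hf hg]; rfl

lemma fderiv_sub_apply' {f g : ℂ → M} {z : ℂ} (hf : DifferentiableAt ℝ f z)
    (hg : DifferentiableAt ℝ g z) (v : ℂ) :
    fderiv ℝ (fun w => f w - g w) z v = fderiv ℝ f z v - fderiv ℝ g z v := by
  erw [fderiv_fun_sub hf hg]; rfl

lemma fderiv_mul_apply' {f g : ℂ → M} {z : ℂ} (hf : DifferentiableAt ℝ f z)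
    (hg : DifferentiableAt ℝ g z) (v : ℂ) :
    fderiv ℝ (fun w => f w * g w) z v = fderiv ℝ f z v * g z + f z * fderiv ℝ g z v := by
  erw [fderiv_fun_mul' hf hg]
  show f z * fderiv ℝ g z v + fderiv ℝ f z v * g z = _
  rw [add_comm]

end VortexAux

set_option maxHeartbeats 4000000 in
open VortexAux in
/-- The moduli-matrix expression of the vortex magnetic field: with
`A_{z̄} = −i·S⁻¹∂_{z̄}S`, `A_z = (A_{z̄})ᴴ = i·∂_z(Sᴴ)·(Sᴴ)⁻¹`, `A₁ = A_z + A_{z̄}`,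
`A₂ = i(A_z − A_{z̄})` and `Ω = SSᴴ`, the field strength
`F₁₂ = ∂₁A₂ − ∂₂A₁ + i[A₁, A₂]` satisfies `F₁₂ = −2·S⁻¹·∂_{z̄}((∂_zΩ)·Ω⁻¹)·S`. -/
theorem field_strength_moduli_matrix (N : ℕ)
    (S : ℂ → Matrix (Fin N) (Fin N) ℂ)
    (hS : ContDiff ℝ 2 S) (hSinv : ∀ z : ℂ, IsUnit (S z))
    (Azbar Az A₁ A₂ F₁₂ Ω : ℂ → Matrix (Fin N) (Fin N) ℂ)
    (hAzbar : ∀ z, Azbar z = -Complex.I • ((S z)⁻¹ * dzbar S z))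
    (hAz : ∀ z, Az z = (Azbar z)ᴴ)
    (hA₁ : ∀ z, A₁ z = Az z + Azbar z)
    (hA₂ : ∀ z, A₂ z = Complex.I • (Az z - Azbar z))
    (hF : ∀ z, F₁₂ z = d1 A₂ z - d2 A₁ z + Complex.I • (A₁ z * A₂ z - A₂ z * A₁ z))
    (hΩ : ∀ z, Ω z = S z * (S z)ᴴ) :
    ∀ z : ℂ, F₁₂ z
      = (-2 : ℂ) • ((S z)⁻¹ * dzbar (fun w => dz Ω w * (Ω w)⁻¹) z * S z) := by
  have hSd : Differentiable ℝ S := hS.differentiable (by norm_num)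
  have hShu : ∀ w, IsUnit ((S w)ᴴ) := fun w => isUnit_conjT (hSinv w)
  have hSid : Differentiable ℝ (fun w => (S w)⁻¹) := diff_matrix_inv hSd hSinv
  have hShd : Differentiable ℝ (fun w => (S w)ᴴ) := diff_star hSd
  have hS'd : ∀ u, Differentiable ℝ (fun w => fderiv ℝ S w u) :=
    fun u => diff_fderiv_apply hS u
  -- `dzbar S`
  have hGF : (fun w => dzbar S w)
      = fun w => (2:ℂ)⁻¹ • (fderiv ℝ S w 1 + Complex.I • fderiv ℝ S w Complex.I) := rfl
  have hsum : Differentiable ℝ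
      (fun w => fderiv ℝ S w 1 + Complex.I • fderiv ℝ S w Complex.I) :=
    (hS'd 1).add ((hS'd Complex.I).const_smul Complex.I)
  have hGd : Differentiable ℝ (fun w => dzbar S w) := by
    rw [hGF]; exact hsum.fun_const_smul _
  have hAzbarF : Azbar = fun w => -Complex.I • ((S w)⁻¹ * dzbar S w) := funext hAzbar
  have hAzbard : Differentiable ℝ Azbar := by
    rw [hAzbarF]; exact (hSid.fun_mul hGd).fun_const_smul _
  have hAzF : Az = fun w => (Azbar w)ᴴ := funext hAz
  have hAzd : Differentiable ℝ Az := by rw [hAzF]; exact diff_star hAzbard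
  have hA₁F : A₁ = fun w => Az w + Azbar w := funext hA₁
  have hA₂F : A₂ = fun w => Complex.I • (Az w - Azbar w) := funext hA₂
  -- Ω side, function level
  have hΩF : Ω = fun w => S w * (S w)ᴴ := funext hΩ
  have hΩC : ContDiff ℝ 2 Ω := by rw [hΩF]; exact hS.mul (contDiff_star_matrix hS)
  have hΩd : Differentiable ℝ Ω := hΩC.differentiable (by norm_num)
  have hΩu : ∀ w, IsUnit (Ω w) := fun w => by
    rw [hΩ w]; exact (hSinv w).mul (isUnit_conjT (hSinv w))
  have hΩid : Differentiable ℝ (fun w => (Ω w)⁻¹) := diff_matrix_inv hΩd hΩu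
  have hΩ' : ∀ w v, fderiv ℝ Ω w v
      = fderiv ℝ S w v * (S w)ᴴ + S w * (fderiv ℝ S w v)ᴴ := by
    intro w v
    conv_lhs => rw [hΩF]
    rw [fderiv_mul_apply' (hSd w) (hShd w), fderiv_star_apply (hSd w)]
  have hΩ'd : ∀ u, Differentiable ℝ (fun w => fderiv ℝ Ω w u) :=
    fun u => diff_fderiv_apply hΩC u
  have hdzΩF : (fun w => dz Ω w)
      = fun w => (2:ℂ)⁻¹ • (fderiv ℝ Ω w 1 - Complex.I • fderiv ℝ Ω w Complex.I) := rfl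
  have hdzΩd : Differentiable ℝ (fun w => dz Ω w) := by
    rw [hdzΩF]; exact ((hΩ'd 1).fun_sub ((hΩ'd Complex.I).fun_const_smul Complex.I)).fun_const_smul _
  intro z
  -- unit cancellation facts
  have hdet : IsUnit (S z).det := (Matrix.isUnit_iff_isUnit_det _).1 (hSinv z)
  have hdeth : IsUnit ((S z)ᴴ).det := (Matrix.isUnit_iff_isUnit_det _).1 (hShu z)
  have hss : (S z)⁻¹ * S z = 1 := Matrix.nonsing_inv_mul _ hdet
  have hss' : S z * (S z)⁻¹ = 1 := Matrix.mul_nonsing_inv _ hdet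
  have htt : ((S z)ᴴ)⁻¹ * (S z)ᴴ = 1 := Matrix.nonsing_inv_mul _ hdeth
  have htt' : (S z)ᴴ * ((S z)ᴴ)⁻¹ = 1 := Matrix.mul_nonsing_inv _ hdeth
  -- derivative of `dzbar S`
  have hG' : ∀ v, fderiv ℝ (fun w => dzbar S w) z v
      = (2:ℂ)⁻¹ • (fderiv ℝ (fderiv ℝ S) z v 1
          + Complex.I • fderiv ℝ (fderiv ℝ S) z v Complex.I) := by
    intro v
    rw [hGF, fderiv_const_smul_apply' (hsum z) _ v,
      fderiv_add_apply' ((hS'd 1) z) (((hS'd Complex.I).fun_const_smul Complex.I) z) v,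
      fderiv_const_smul_apply' ((hS'd Complex.I) z) Complex.I v,
      fderiv_fderiv_apply hS z v 1, fderiv_fderiv_apply hS z v Complex.I]
  -- derivative of Azbar
  have hAzbar' : ∀ v, fderiv ℝ Azbar z v
      = -Complex.I • ( -((S z)⁻¹ * fderiv ℝ S z v * (S z)⁻¹) * dzbar S z
          + (S z)⁻¹ * ((2:ℂ)⁻¹ • (fderiv ℝ (fderiv ℝ S) z v 1
            + Complex.I • fderiv ℝ (fderiv ℝ S) z v Complex.I)) ) := by
    intro v
    conv_lhs => rw [hAzbarF]
    rw [fderiv_const_smul_apply' ((hSid z).fun_mul (hGd z)) (-Complex.I) v,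
      fderiv_mul_apply' (hSid z) (hGd z) v,
      fderiv_matrix_inv_apply (hSd z) (hSinv z) v, hG' v]
  have hAz' : ∀ v, fderiv ℝ Az z v = (fderiv ℝ Azbar z v)ᴴ := by
    intro v
    conv_lhs => rw [hAzF]
    exact fderiv_star_apply (hAzbard z) v
  -- derivatives of A₁, A₂
  have hdA₂ : ∀ v, fderiv ℝ A₂ z v
      = Complex.I • ((fderiv ℝ Azbar z v)ᴴ - fderiv ℝ Azbar z v) := by
    intro v
    conv_lhs => rw [hA₂F]
    rw [fderiv_const_smul_apply' ((hAzd z).fun_sub (hAzbard z)) Complex.I v,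
      fderiv_sub_apply' (hAzd z) (hAzbard z) v, hAz' v]
  have hdA₁ : ∀ v, fderiv ℝ A₁ z v
      = (fderiv ℝ Azbar z v)ᴴ + fderiv ℝ Azbar z v := by
    intro v
    conv_lhs => rw [hA₁F]
    rw [fderiv_add_apply' (hAzd z) (hAzbard z) v, hAz' v]
  -- second derivative of Ω in terms of S
  have hΩ'' : ∀ v u, fderiv ℝ (fun w => fderiv ℝ Ω w u) z v
      = (fderiv ℝ (fderiv ℝ S) z v u * (S z)ᴴ + fderiv ℝ S z u * (fderiv ℝ S z v)ᴴ)
        + (fderiv ℝ S z v * (fderiv ℝ S z u)ᴴ + S z * (fderiv ℝ (fderiv ℝ S) z v u)ᴴ) := by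
    intro v u
    have h1 : (fun w => fderiv ℝ Ω w u)
        = fun w => fderiv ℝ S w u * (S w)ᴴ + S w * (fderiv ℝ S w u)ᴴ :=
      funext fun w => hΩ' w u
    rw [h1,
      fderiv_add_apply' (((hS'd u) z).fun_mul (hShd z)) ((hSd z).fun_mul ((diff_star (hS'd u)) z)) v,
      fderiv_mul_apply' ((hS'd u) z) (hShd z) v,
      fderiv_mul_apply' (hSd z) ((diff_star (hS'd u)) z) v,
      fderiv_star_apply (hSd z) v, fderiv_star_apply ((hS'd u) z) v,
      fderiv_fderiv_apply hS z v u]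
  -- derivative of Ω⁻¹
  have hΩinv' : ∀ v, fderiv ℝ (fun w => (Ω w)⁻¹) z v
      = -((Ω z)⁻¹ * fderiv ℝ Ω z v * (Ω z)⁻¹) :=
    fderiv_matrix_inv_apply (hΩd z) (hΩu z)
  -- derivative of dz Ω
  have hdzΩ' : ∀ v, fderiv ℝ (fun w => dz Ω w) z v
      = (2:ℂ)⁻¹ • (fderiv ℝ (fun w => fderiv ℝ Ω w 1) z v
          - Complex.I • fderiv ℝ (fun w => fderiv ℝ Ω w Complex.I) z v) := by
    intro v
    rw [hdzΩF,
      fderiv_const_smul_apply' (((hΩ'd 1).fun_sub ((hΩ'd Complex.I).fun_const_smul Complex.I)) z) _ v,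
      fderiv_sub_apply' ((hΩ'd 1) z) (((hΩ'd Complex.I).fun_const_smul Complex.I) z) v,
      fderiv_const_smul_apply' ((hΩ'd Complex.I) z) Complex.I v]
  -- Leibniz for the RHS
  have hRHS : ∀ v, fderiv ℝ (fun w => dz Ω w * (Ω w)⁻¹) z v
      = fderiv ℝ (fun w => dz Ω w) z v * (Ω z)⁻¹
        + dz Ω z * fderiv ℝ (fun w => (Ω w)⁻¹) z v :=
    fderiv_mul_apply' (hdzΩd z) (hΩid z)
  -- assemble
  have eL1 : d1 A₂ z = fderiv ℝ A₂ z 1 := rfl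
  have eL2 : d2 A₁ z = fderiv ℝ A₁ z Complex.I := rfl
  have eR : dzbar (fun w => dz Ω w * (Ω w)⁻¹) z
      = (2:ℂ)⁻¹ • (fderiv ℝ (fun w => dz Ω w * (Ω w)⁻¹) z 1
        + Complex.I • fderiv ℝ (fun w => dz Ω w * (Ω w)⁻¹) z Complex.I) := rfl
  have edzΩ : dz Ω z = (2:ℂ)⁻¹ • (fderiv ℝ Ω z 1 - Complex.I • fderiv ℝ Ω z Complex.I) := rfl
  have edzbarS : dzbar S z
      = (2:ℂ)⁻¹ • (fderiv ℝ S z 1 + Complex.I • fderiv ℝ S z Complex.I) := rfl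
  have hsymm : fderiv ℝ (fderiv ℝ S) z Complex.I 1
      = fderiv ℝ (fderiv ℝ S) z 1 Complex.I := fderiv_fderiv_symm hS z Complex.I 1
  rw [hF z, eL1, eL2, hdA₂ 1, hdA₁ Complex.I, hAzbar' 1, hAzbar' Complex.I,
    hA₁ z, hA₂ z, hAz z, hAzbar z,
    eR, hRHS 1, hRHS Complex.I, hdzΩ' 1, hdzΩ' Complex.I,
    hΩ'' 1 1, hΩ'' 1 Complex.I, hΩ'' Complex.I 1, hΩ'' Complex.I Complex.I,
    hΩinv' 1, hΩinv' Complex.I, edzΩ, hΩ' z 1, hΩ' z Complex.I, edzbarS,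
    hΩ z, Matrix.mul_inv_rev, hsymm]
  have hc1 : ∀ X : Matrix (Fin N) (Fin N) ℂ, (S z)⁻¹ * (S z * X) = X := fun X => by
    rw [← mul_assoc, hss, one_mul]
  have hc2 : ∀ X : Matrix (Fin N) (Fin N) ℂ, S z * ((S z)⁻¹ * X) = X := fun X => by
    rw [← mul_assoc, hss', one_mul]
  have hc3 : ∀ X : Matrix (Fin N) (Fin N) ℂ, ((S z)ᴴ)⁻¹ * ((S z)ᴴ * X) = X := fun X => by
    rw [← mul_assoc, htt, one_mul]
  have hc4 : ∀ X : Matrix (Fin N) (Fin N) ℂ, (S z)ᴴ * (((S z)ᴴ)⁻¹ * X) = X := fun X => by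
    rw [← mul_assoc, htt', one_mul]
  simp only [conjTranspose_add, conjTranspose_sub, conjTranspose_mul, conjTranspose_smul,
    conjTranspose_neg, conjTranspose_conjTranspose, Matrix.conjTranspose_nonsing_inv,
    Complex.star_def, map_neg, map_inv₀, Complex.conj_I, Complex.conj_ofNat]
  simp only [mul_add, add_mul, mul_sub, sub_mul, smul_add, smul_sub, mul_smul_comm,
    smul_mul_assoc, smul_smul, neg_mul, mul_neg, neg_smul, smul_neg, neg_neg, neg_add,
    mul_assoc, mul_one, one_mul, hc1, hc2, hc3, hc4, hss, hss', htt, htt']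
  have i2 : (Complex.I:ℂ)^(2:ℕ) = -1 := Complex.I_sq
  have i3 : (Complex.I:ℂ)^(3:ℕ) = -Complex.I := by norm_num [pow_succ, Complex.I_mul_I]
  have i4 : (Complex.I:ℂ)^(4:ℕ) = 1 := by norm_num [pow_succ, Complex.I_mul_I]
  have i5 : (Complex.I:ℂ)^(5:ℕ) = Complex.I := by norm_num [pow_succ, Complex.I_mul_I]
  have i6 : (Complex.I:ℂ)^(6:ℕ) = -1 := by norm_num [pow_succ, Complex.I_mul_I]
  match_scalars
  all_goals (try ring_nf)
  all_goals (try simp only [i2, i3, i4, i5, i6])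
  all_goals norm_num
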